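/- Let 0 < r ≤ 1 with 1/r not an integer, k = ⌊1/r⌋, and for sufficiently large n set m = n − k⌈rn⌉ and l = (k+1)⌈rn⌉ − n. Then Q(n, ⌈rn⌉) ≤ ω(kl, k) + ω((k+1)m, k+1). -/

import Mathlib

open SimpleGraph

/-- The independence number of a graph: clique number of the complement. -/
noncomputable def indepNum {V : Type*} (G : SimpleGraph V) : ℕ := Gᶜ.cliqueNum

/-- The chromatic number of a graph, as a natural number. -/
noncomputable def chi {V : Type*} (G : SimpleGraph V) : ℕ := G.chromaticNumber.toNat

/-- The inverse Ramsey number ω(n,k): minimum clique number over graphs on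
`n` vertices with independence number at most `k`. -/
noncomputable def invRamsey (n k : ℕ) : ℕ :=
  sInf {w | ∃ G : SimpleGraph (Fin n), _root_.indepNum G ≤ k ∧ G.cliqueNum = w}

/-- Q(n,c): minimum clique number over graphs on `n` vertices with chromatic number `c`. -/
noncomputable def Q (n c : ℕ) : ℕ :=
  sInf {w | ∃ G : SimpleGraph (Fin n), chi G = c ∧ G.cliqueNum = w}

/-! ### Auxiliary lemmas -/

/-- clique number is monotone. -/
lemma myCliqueNum_mono {α : Type*} [Fintype α] {G H : SimpleGraph α} (h : G ≤ H) :
    G.cliqueNum ≤ H.cliqueNum := by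
  obtain ⟨s, hs⟩ := G.exists_isNClique_cliqueNum
  rw [← hs.2]
  exact IsClique.card_le_cliqueNum (tc := hs.1.mono h)

lemma myCliqueNum_le_of_embedding {α β : Type*} [Fintype α] [Fintype β]
    {G : SimpleGraph α} {H : SimpleGraph β} (f : G ↪g H) :
    G.cliqueNum ≤ H.cliqueNum := by
  classical
  obtain ⟨s, hs⟩ := G.exists_isNClique_cliqueNum
  have hc : H.IsClique (s.map f.toEmbedding) := by
    intro x hx y hy hxy
    simp only [Finset.coe_map, Set.mem_image, Finset.mem_coe] at hx hy
    obtain ⟨a, ha, rfl⟩ := hx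
    obtain ⟨b, hb, rfl⟩ := hy
    have hab : a ≠ b := fun h => hxy (by rw [h])
    exact f.map_adj_iff.2 (hs.1 ha hb hab)
  have := IsClique.card_le_cliqueNum (tc := hc)
  rwa [Finset.card_map, hs.2] at this

lemma cliqueNum_bot_le_one {α : Type*} [Fintype α] :
    (⊥ : SimpleGraph α).cliqueNum ≤ 1 := by
  obtain ⟨s, hs⟩ := (⊥ : SimpleGraph α).exists_isNClique_cliqueNum
  rw [← hs.2]
  refine Finset.card_le_one.2 fun a ha b hb => ?_
  by_contra hab
  exact hs.1 ha hb hab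

lemma indep_card_le {α : Type*} [Fintype α] {G : SimpleGraph α} {s : Finset α}
    (hs : ∀ a ∈ s, ∀ b ∈ s, a ≠ b → ¬ G.Adj a b) : s.card ≤ _root_.indepNum G := by
  have hc : Gᶜ.IsClique s := fun a ha b hb hab => ⟨hab, hs a ha b hb hab⟩
  exact IsClique.card_le_cliqueNum (tc := hc)

lemma invRamsey_spec (n k : ℕ) (hk : 1 ≤ k) :
    ∃ G : SimpleGraph (Fin n), _root_.indepNum G ≤ k ∧ G.cliqueNum = invRamsey n k := by
  have hne : {w | ∃ G : SimpleGraph (Fin n), _root_.indepNum G ≤ k ∧ G.cliqueNum = w}.Nonempty := by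
    refine ⟨(⊤ : SimpleGraph (Fin n)).cliqueNum, ⊤, ?_, rfl⟩
    have : _root_.indepNum (⊤ : SimpleGraph (Fin n)) ≤ 1 := by
      unfold _root_.indepNum
      rw [compl_top]
      exact cliqueNum_bot_le_one
    exact this.trans hk
  exact Nat.sInf_mem hne

/-- The join of two graphs on a sum type. -/
def joinG {α β : Type*} (G1 : SimpleGraph α) (G2 : SimpleGraph β) : SimpleGraph (α ⊕ β) where
  Adj u v :=
    match u, v with
    | Sum.inl a, Sum.inl b => G1.Adj a b
    | Sum.inr a, Sum.inr b => G2.Adj a b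
    | _, _ => True
  symm := ⟨by rintro (a|a) (b|b) h <;> first | exact trivial | exact h.symm⟩
  loopless := ⟨by rintro (a|a) h <;> exact SimpleGraph.irrefl _ h⟩

lemma joinG_adj_ll {α β : Type*} {G1 : SimpleGraph α} {G2 : SimpleGraph β} {a b : α} :
    (joinG G1 G2).Adj (Sum.inl a) (Sum.inl b) ↔ G1.Adj a b := Iff.rfl

lemma joinG_adj_rr {α β : Type*} {G1 : SimpleGraph α} {G2 : SimpleGraph β} {a b : β} :
    (joinG G1 G2).Adj (Sum.inr a) (Sum.inr b) ↔ G2.Adj a b := Iff.rfl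

lemma joinG_adj_lr {α β : Type*} {G1 : SimpleGraph α} {G2 : SimpleGraph β} {a : α} {b : β} :
    (joinG G1 G2).Adj (Sum.inl a) (Sum.inr b) := trivial

lemma cliqueNum_joinG_le {α β : Type*} [Fintype α] [Fintype β]
    (G1 : SimpleGraph α) (G2 : SimpleGraph β) :
    (joinG G1 G2).cliqueNum ≤ G1.cliqueNum + G2.cliqueNum := by
  classical
  obtain ⟨s, hs⟩ := (joinG G1 G2).exists_isNClique_cliqueNum
  rw [← hs.2, ← Finset.card_toLeft_add_card_toRight (u := s)]
  have hL : G1.IsClique s.toLeft := by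
    intro a ha b hb hab
    simp only [Finset.coe_sort_coe, Finset.mem_coe, Finset.mem_toLeft] at ha hb
    exact joinG_adj_ll.1 (hs.1 ha hb (by simpa using hab))
  have hR : G2.IsClique s.toRight := by
    intro a ha b hb hab
    simp only [Finset.coe_sort_coe, Finset.mem_coe, Finset.mem_toRight] at ha hb
    exact joinG_adj_rr.1 (hs.1 ha hb (by simpa using hab))
  exact Nat.add_le_add (IsClique.card_le_cliqueNum (tc := hL))
    (IsClique.card_le_cliqueNum (tc := hR))

lemma joinG_color_lb {k l m t : ℕ}
    (G1 : SimpleGraph (Fin (k*l))) (G2 : SimpleGraph (Fin ((k+1)*m)))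
    (hk : 1 ≤ k) (h1 : _root_.indepNum G1 ≤ k) (h2 : _root_.indepNum G2 ≤ k+1)
    (hc : (joinG G1 G2).Colorable t) : l + m ≤ t := by
  classical
  obtain ⟨C⟩ := hc
  set fL : Fin (k*l) → Fin t := fun a => C (Sum.inl a) with hfL
  set fR : Fin ((k+1)*m) → Fin t := fun b => C (Sum.inr b) with hfR
  set SL := Finset.univ.image fL with hSL
  set SR := Finset.univ.image fR with hSR
  have hLcard : k * l ≤ k * SL.card := by
    have := Finset.card_le_mul_card_image (f := fL) Finset.univ k ?_
    · simpa [Finset.card_univ] using this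
    · intro x _
      refine (indep_card_le (G := G1) ?_).trans h1
      intro a ha b hb hab hadj
      simp only [Finset.mem_filter] at ha hb
      exact C.valid (joinG_adj_ll.2 hadj) (by rw [show C (Sum.inl a) = x from ha.2,
        show C (Sum.inl b) = x from hb.2])
  have hRcard : (k+1) * m ≤ (k+1) * SR.card := by
    have := Finset.card_le_mul_card_image (f := fR) Finset.univ (k+1) ?_
    · simpa [Finset.card_univ] using this
    · intro x _
      refine (indep_card_le (G := G2) ?_).trans h2
      intro a ha b hb hab hadj
      simp only [Finset.mem_filter] at ha hb
      exact C.valid (joinG_adj_rr.2 hadj) (by rw [show C (Sum.inr a) = x from ha.2,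
        show C (Sum.inr b) = x from hb.2])
  have hl : l ≤ SL.card := Nat.le_of_mul_le_mul_left hLcard hk
  have hm : m ≤ SR.card := Nat.le_of_mul_le_mul_left hRcard (Nat.succ_pos k)
  have hdisj : Disjoint SL SR := by
    rw [Finset.disjoint_left]
    intro x hxL hxR
    simp only [hSL, hSR, Finset.mem_image, Finset.mem_univ, true_and] at hxL hxR
    obtain ⟨a, ha⟩ := hxL
    obtain ⟨b, hb⟩ := hxR
    exact C.valid (joinG_adj_lr (a := a) (b := b)) (ha.trans hb.symm)
  calc l + m ≤ SL.card + SR.card := Nat.add_le_add hl hm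
    _ = (SL ∪ SR).card := (Finset.card_union_of_disjoint hdisj).symm
    _ ≤ Finset.univ.card := Finset.card_le_card (Finset.subset_univ _)
    _ = t := by simp

lemma colorable_succ_of_deleteEdge {V : Type*} [DecidableEq V] (G : SimpleGraph V) (u v : V)
    {t : ℕ} (h : (G.deleteEdges {s(u,v)}).Colorable t) : G.Colorable (t+1) := by
  obtain ⟨C⟩ := h
  refine ⟨Coloring.mk (fun x => if x = u then Fin.last t else (C x).castSucc) ?_⟩
  intro a b hab
  by_cases ha : a = u <;> by_cases hb : b = u
  · subst ha; subst hb; exact absurd hab (G.irrefl)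
  · simp only [ha, if_pos rfl, if_neg hb]
    exact (Fin.castSucc_lt_last _).ne'
  · simp only [hb, if_pos rfl, if_neg ha]
    exact (Fin.castSucc_lt_last _).ne
  · simp only [if_neg ha, if_neg hb]
    have hadj : (G.deleteEdges {s(u,v)}).Adj a b := by
      rw [deleteEdges_adj]
      refine ⟨hab, ?_⟩
      simp only [Set.mem_singleton_iff, Sym2.eq, Sym2.rel_iff', Prod.mk.injEq, Prod.swap_prod_mk]
      rintro (⟨rfl, rfl⟩ | ⟨rfl, rfl⟩)
      · exact ha rfl
      · exact hb rfl
    intro hEq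
    exact C.valid hadj (Fin.castSucc_injective t hEq)

lemma exists_le_chromaticNumber_eq {n : ℕ} (hn : 0 < n) {c : ℕ} (hc : 1 ≤ c) :
    ∀ (E : ℕ) (G : SimpleGraph (Fin n)), G.edgeSet.ncard ≤ E →
      (c : ℕ∞) ≤ G.chromaticNumber →
      ∃ G' : SimpleGraph (Fin n), G' ≤ G ∧ G'.chromaticNumber = (c : ℕ∞) := by
  have : Nonempty (Fin n) := Fin.pos_iff_nonempty.1 hn
  intro E
  induction E with
  | zero =>
    intro G hE hle
    have hbot : G = ⊥ := by
      rw [← edgeSet_eq_empty]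
      have := G.edgeSet.toFinite
      rw [← Set.ncard_eq_zero this]
      omega
    refine ⟨G, le_refl _, ?_⟩
    have h1 : G.chromaticNumber = 1 := by rw [hbot]; exact chromaticNumber_bot
    have : (c : ℕ∞) ≤ 1 := h1 ▸ hle
    have hc1 : c = 1 := le_antisymm (by exact_mod_cast this) hc
    rw [h1, hc1, Nat.cast_one]
  | succ E ih =>
    intro G hE hle
    by_cases heq : G.chromaticNumber = (c : ℕ∞)
    · exact ⟨G, le_refl _, heq⟩
    have hlt : (c : ℕ∞) < G.chromaticNumber := lt_of_le_of_ne hle (Ne.symm heq)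
    have hedge : ∃ u v, G.Adj u v := by
      by_contra hno
      push_neg at hno
      have hbot : G = ⊥ := by ext a b; simp [hno a b]
      rw [hbot, chromaticNumber_bot] at hlt
      have : (c:ℕ∞) < 1 := hlt
      have : c < 1 := by exact_mod_cast this
      omega
    obtain ⟨u, v, huv⟩ := hedge
    set G' := G.deleteEdges {s(u,v)} with hG'
    have hle' : G' ≤ G := deleteEdges_le _
    have hecard : G'.edgeSet.ncard ≤ E := by
      have hmem : s(u,v) ∈ G.edgeSet := huv
      have heq2 : G'.edgeSet = G.edgeSet \ {s(u,v)} := edgeSet_deleteEdges _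
      have hlt2 : G'.edgeSet.ncard < G.edgeSet.ncard := by
        rw [heq2]
        exact Set.ncard_diff_singleton_lt_of_mem hmem G.edgeSet.toFinite
      omega
    have hfin' : G'.chromaticNumber ≠ ⊤ := by
      rw [chromaticNumber_ne_top_iff_exists]
      exact ⟨Fintype.card (Fin n), G'.colorable_of_fintype⟩
    set t' := G'.chromaticNumber.toNat with ht'
    have hct' : (t' : ℕ∞) = G'.chromaticNumber := ENat.coe_toNat hfin'
    have hcol' : G'.Colorable t' := G'.colorable_chromaticNumber_of_fintype
    have hcol : G.Colorable (t' + 1) := colorable_succ_of_deleteEdge G u v hcol'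
    have hchain : (c : ℕ∞) < ((t' + 1 : ℕ) : ℕ∞) :=
      lt_of_lt_of_le hlt hcol.chromaticNumber_le
    have hct : c < t' + 1 := by exact_mod_cast hchain
    have hcle' : (c : ℕ∞) ≤ G'.chromaticNumber := by
      rw [← hct']
      exact_mod_cast Nat.lt_succ_iff.1 hct
    obtain ⟨G'', hG''le, hG''⟩ := ih G' hecard hcle'
    exact ⟨G'', hG''le.trans hle', hG''⟩

theorem stmt_18 (r : ℝ) (hr0 : 0 < r) (hr1 : r ≤ 1) (hint : ¬ ∃ z : ℤ, (1 / r : ℝ) = z)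
    (k : ℕ) (hk : k = ⌊1 / r⌋₊) :
    ∃ N : ℕ, ∀ n ≥ N, ∀ m l : ℕ, m = n - k * ⌈r * n⌉₊ → l = (k + 1) * ⌈r * n⌉₊ - n →
      Q n ⌈r * n⌉₊ ≤ invRamsey (k * l) k + invRamsey ((k + 1) * m) (k + 1) := by
  classical
  -- basic facts about k and r
  have h1r : (1:ℝ) ≤ 1 / r := by
    rw [le_div_iff₀ hr0]; linarith
  have hk1 : 1 ≤ k := by
    rw [hk]
    exact Nat.le_floor (by exact_mod_cast h1r)
  have hfl : (k:ℝ) ≤ 1 / r := hk ▸ Nat.floor_le (by positivity)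
  have hne : (k:ℝ) ≠ 1 / r := by
    intro h
    exact hint ⟨(k:ℤ), by push_cast; exact h.symm⟩
  have hklt : (k:ℝ) < 1 / r := lt_of_le_of_ne hfl hne
  have hkr : (k:ℝ) * r < 1 := (lt_div_iff₀ hr0).1 hklt
  have hrk1 : (1:ℝ) / r < k + 1 := by
    rw [hk]
    exact_mod_cast Nat.lt_floor_add_one (1/r)
  have hk1r : (1:ℝ) < ((k:ℝ) + 1) * r := (div_lt_iff₀ hr0).1 hrk1
  set ε : ℝ := 1 - k * r with hεdef
  have hε : 0 < ε := by simp only [hεdef]; linarith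
  refine ⟨max 1 ⌈((k:ℝ)+1)/ε⌉₊, fun n hn m l hm hl => ?_⟩
  have hn1 : 1 ≤ n := le_trans (le_max_left _ _) hn
  have hnceil : ⌈((k:ℝ)+1)/ε⌉₊ ≤ n := le_trans (le_max_right _ _) hn
  have hnR : ((k:ℝ)+1)/ε ≤ n := by
    rw [← Nat.ceil_le]; exact_mod_cast hnceil
  have hεn : (k:ℝ) + 1 ≤ ε * n := by
    rw [div_le_iff₀ hε] at hnR; linarith
  set c := ⌈r * (n:ℕ)⌉₊ with hc
  have hnpos : (0:ℝ) < n := by exact_mod_cast hn1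
  have hcpos : 1 ≤ c := by
    rw [hc]
    exact Nat.one_le_iff_ne_zero.2 (by
      simp only [ne_eq, Nat.ceil_eq_zero, not_le]
      positivity)
  have hc_real : (c:ℝ) ≤ r * n + 1 := (Nat.ceil_lt_add_one (by positivity)).le
  have h1 : k * c ≤ n := by
    have h0k : (0:ℝ) ≤ k := Nat.cast_nonneg k
    have hmul : (k:ℝ) * c ≤ (k:ℝ) * (r * n + 1) := mul_le_mul_of_nonneg_left hc_real h0k
    have hRR : (k:ℝ) * c ≤ n := by nlinarith
    exact_mod_cast (by push_cast; exact hRR : ((k * c : ℕ) : ℝ) ≤ (n:ℝ))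
  have h2 : n ≤ (k + 1) * c := by
    have hle : r * n ≤ (c:ℝ) := Nat.le_ceil _
    have hRR : (n:ℝ) ≤ ((k:ℝ) + 1) * c := by nlinarith
    exact_mod_cast (by push_cast; exact hRR : ((n:ℕ) : ℝ) ≤ (((k+1) * c : ℕ) : ℝ))
  -- arithmetic identities
  have hlm : l + m = c := by
    have hab : (k+1) * c = k * c + c := by ring
    omega
  have hn' : k * l + (k + 1) * m = n := by
    have hstep : k * l + (k + 1) * m = k * (l + m) + m := by ring
    rw [hstep, hlm]
    omega
  -- get the extremal graphs
  obtain ⟨G1, hG1i, hG1c⟩ := invRamsey_spec (k * l) k hk1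
  obtain ⟨G2, hG2i, hG2c⟩ := invRamsey_spec ((k + 1) * m) (k + 1) (Nat.le_add_left 1 k)
  set H := joinG G1 G2 with hH
  -- transport to Fin n
  have hneq : n = k * l + (k + 1) * m := hn'.symm
  let e : Fin n ≃ (Fin (k * l) ⊕ Fin ((k + 1) * m)) :=
    (finCongr hneq).trans finSumFinEquiv.symm
  set G0 := H.comap e.toEmbedding with hG0
  have φ : G0 ≃g H := Iso.comap e H
  have hcl0 : G0.cliqueNum ≤ H.cliqueNum := myCliqueNum_le_of_embedding φ.toEmbedding
  -- chromatic lower bound for G0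
  have hfin0 : G0.chromaticNumber ≠ ⊤ := by
    rw [chromaticNumber_ne_top_iff_exists]
    exact ⟨Fintype.card (Fin n), G0.colorable_of_fintype⟩
  have hchr0 : (c : ℕ∞) ≤ G0.chromaticNumber := by
    set t0 := G0.chromaticNumber.toNat with ht0
    have hcol0 : G0.Colorable t0 := G0.colorable_chromaticNumber_of_fintype
    have hcolH : H.Colorable t0 := Colorable.of_hom φ.symm.toEmbedding.toHom hcol0
    have hlb : l + m ≤ t0 := joinG_color_lb G1 G2 hk1 hG1i hG2i hcolH
    have : c ≤ t0 := hlm ▸ hlb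
    calc (c : ℕ∞) ≤ (t0 : ℕ∞) := by exact_mod_cast this
      _ = G0.chromaticNumber := ENat.coe_toNat hfin0
  -- find a subgraph with chromatic number exactly c
  obtain ⟨G', hG'le, hG'chr⟩ :=
    exists_le_chromaticNumber_eq hn1 hcpos G0.edgeSet.ncard G0 le_rfl hchr0
  have hchi : chi G' = c := by
    unfold chi
    rw [hG'chr]
    simp
  have hQle : Q n c ≤ G'.cliqueNum := Nat.sInf_le ⟨G', hchi, rfl⟩
  calc Q n c ≤ G'.cliqueNum := hQle
    _ ≤ G0.cliqueNum := myCliqueNum_mono hG'le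
    _ ≤ H.cliqueNum := hcl0
    _ ≤ G1.cliqueNum + G2.cliqueNum := cliqueNum_joinG_le G1 G2
    _ = invRamsey (k * l) k + invRamsey ((k + 1) * m) (k + 1) := by rw [hG1c, hG2c]
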